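/- Let (Ω, F, P) be a probability space, p ∈ [1, ∞), and let ρ1, ρ2 : L^p(Ω, F, P) → ℝ be functionals continuous with respect to the L^p norm. For Z ∈ L^p define V(Z) := inf_{f ∈ A^0_Lip} [ρ1(f(Z)) + ρ2(Z − f(Z))]. Let (Z_n)_{n≥1}, Z ∈ L^p with ‖Z_n − Z‖_p → 0, and let f̂_n ∈ A^0_Lip satisfy ρ1(f̂_n(Z_n)) + ρ2(Z_n − f̂_n(Z_n)) = V(Z_n) for every n. If f̂_n → g uniformly on every compact subset of ℝ for some function g : ℝ → ℝ, then g ∈ A^0_Lip and ρ1(g(Z)) + ρ2(Z − g(Z)) = V(Z); that is, every locally uniform limit point of the minimizers for Z_n is a minimizer for Z. -/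

import Mathlib

open MeasureTheory Filter Topology
open scoped ENNReal NNReal

/-- The set `A⁰_Lip` of normalized Lipschitz allocations. -/
def IsA0Lip (f : ℝ → ℝ) : Prop :=
  f 0 = 0 ∧ LipschitzWith 1 f ∧ LipschitzWith 1 (fun x => x - f x)

/-- Sequential continuity of a functional with respect to the `L^p` norm. -/
def LpSeqContinuous {Ω : Type*} [MeasurableSpace Ω] (μ : MeasureTheory.Measure Ω)
    (p : ℝ≥0∞) (ρ : (Ω → ℝ) → ℝ) : Prop :=
  ∀ (Y : ℕ → Ω → ℝ) (Z : Ω → ℝ), (∀ n, MemLp (Y n) p μ) → MemLp Z p μ →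
    Filter.Tendsto (fun n => eLpNorm (Y n - Z) p μ) Filter.atTop (nhds 0) →
    Filter.Tendsto (fun n => ρ (Y n)) Filter.atTop (nhds (ρ Z))

/-- The value function `V(Z) = inf_{f ∈ A⁰_Lip} [ρ1(f(Z)) + ρ2(Z - f(Z))]`. -/
noncomputable def riskSharingValue {Ω : Type*} [MeasurableSpace Ω]
    (ρ1 ρ2 : (Ω → ℝ) → ℝ) (Z : Ω → ℝ) : ℝ :=
  sInf {r : ℝ | ∃ f : ℝ → ℝ, IsA0Lip f ∧
    r = ρ1 (fun ω => f (Z ω)) + ρ2 (fun ω => Z ω - f (Z ω))}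

section Aux

lemma IsA0Lip.abs_le {f : ℝ → ℝ} (hf : IsA0Lip f) (x : ℝ) : |f x| ≤ |x| := by
  have h := hf.2.1.dist_le_mul x 0
  simpa [Real.dist_eq, hf.1] using h

lemma IsA0Lip.abs_sub_le {f : ℝ → ℝ} (hf : IsA0Lip f) (x : ℝ) : |x - f x| ≤ |x| := by
  have h := hf.2.2.dist_le_mul x 0
  simpa [Real.dist_eq, hf.1] using h

lemma IsA0Lip.compl {f : ℝ → ℝ} (hf : IsA0Lip f) : IsA0Lip (fun x => x - f x) := by
  refine ⟨by simp [hf.1], hf.2.2, ?_⟩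
  simp only [sub_sub_cancel]
  exact hf.2.1

lemma IsA0Lip.memLp {Ω : Type*} [MeasurableSpace Ω] {μ : Measure Ω} {p : ℝ≥0∞}
    {f : ℝ → ℝ} {Z : Ω → ℝ} (hf : IsA0Lip f) (hZ : MemLp Z p μ) :
    MemLp (fun ω => f (Z ω)) p μ :=
  ⟨hf.2.1.continuous.comp_aestronglyMeasurable hZ.1,
    lt_of_le_of_lt
      (eLpNorm_mono fun ω => by simpa [Real.norm_eq_abs] using hf.abs_le (Z ω)) hZ.2⟩

lemma IsA0Lip.memLp_sub {Ω : Type*} [MeasurableSpace Ω] {μ : Measure Ω} {p : ℝ≥0∞}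
    {f : ℝ → ℝ} {Z : Ω → ℝ} (hf : IsA0Lip f) (hZ : MemLp Z p μ) :
    MemLp (fun ω => Z ω - f (Z ω)) p μ :=
  hf.compl.memLp hZ

/-- A pointwise limit of elements of `A⁰_Lip` is in `A⁰_Lip`. -/
lemma isA0Lip_of_tendsto {F : ℕ → ℝ → ℝ} {g : ℝ → ℝ} (hF : ∀ n, IsA0Lip (F n))
    (h : ∀ x, Tendsto (fun n => F n x) atTop (𝓝 (g x))) : IsA0Lip g := by
  have h0 : g 0 = 0 := by
    have h0' : Tendsto (fun n => F n 0) atTop (𝓝 (0 : ℝ)) := by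
      have : (fun n : ℕ => F n 0) = fun _ => (0 : ℝ) := funext fun n => (hF n).1
      rw [this]; exact tendsto_const_nhds
    exact tendsto_nhds_unique (h 0) h0'
  refine ⟨h0, ?_, ?_⟩
  · refine LipschitzWith.of_dist_le_mul fun x y => ?_
    refine le_of_tendsto ((h x).dist (h y)) (Eventually.of_forall fun n => ?_)
    simpa using (hF n).2.1.dist_le_mul x y
  · refine LipschitzWith.of_dist_le_mul fun x y => ?_
    have hx : Tendsto (fun n => x - F n x) atTop (𝓝 (x - g x)) := tendsto_const_nhds.sub (h x)
    have hy : Tendsto (fun n => y - F n y) atTop (𝓝 (y - g y)) := tendsto_const_nhds.sub (h y)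
    refine le_of_tendsto (hx.dist hy) (Eventually.of_forall fun n => ?_)
    simpa using (hF n).2.2.dist_le_mul x y

/-- Uniform integrability of a family dominated by a fixed `Memℒp` function. -/
lemma unifIntegrable_of_norm_le {Ω : Type*} [MeasurableSpace Ω] {μ : Measure Ω} {p : ℝ≥0∞}
    (hp : 1 ≤ p) (hp' : p ≠ ∞) {F : ℕ → Ω → ℝ} {G : Ω → ℝ} (hG : MemLp G p μ)
    (hle : ∀ n ω, ‖F n ω‖ ≤ ‖G ω‖) : UnifIntegrable F p μ := by
  intro ε hε
  obtain ⟨δ, hδ, h⟩ := hG.eLpNorm_indicator_le hp hp' hε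
  refine ⟨δ, hδ, fun i s hs hμs => le_trans (eLpNorm_mono fun ω => ?_) (h s hs hμs)⟩
  by_cases hω : ω ∈ s
  · simpa [Set.indicator_apply, hω, Real.norm_eq_abs] using hle i ω
  · simp [Set.indicator_apply, hω]

/-- Key convergence: if `F n ∈ A⁰_Lip` converge pointwise to `g` and `Z n → Zlim` in `L^p`,
then `F n (Z n ·) → g (Zlim ·)` in `L^p`. -/
lemma key_conv {Ω : Type*} [MeasurableSpace Ω] {μ : Measure Ω} [IsProbabilityMeasure μ]
    {p : ℝ≥0∞} (hp : 1 ≤ p) (hp_top : p ≠ ∞)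
    {Z : ℕ → Ω → ℝ} {Zlim : Ω → ℝ} (hZn : ∀ n, MemLp (Z n) p μ) (hZ : MemLp Zlim p μ)
    (hZconv : Tendsto (fun n => eLpNorm (Z n - Zlim) p μ) atTop (𝓝 0))
    {F : ℕ → ℝ → ℝ} {g : ℝ → ℝ} (hF : ∀ n, IsA0Lip (F n))
    (hpt : ∀ x, Tendsto (fun n => F n x) atTop (𝓝 (g x))) :
    Tendsto (fun n => eLpNorm ((fun ω => F n (Z n ω)) - fun ω => g (Zlim ω)) p μ)
      atTop (𝓝 0) := by
  have hg : IsA0Lip g := isA0Lip_of_tendsto hF hpt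
  -- convergence of F n ∘ Zlim to g ∘ Zlim in L^p (dominated convergence)
  have hA : Tendsto (fun n => eLpNorm ((fun ω => F n (Zlim ω)) - fun ω => g (Zlim ω)) p μ)
      atTop (𝓝 0) := by
    refine tendsto_Lp_finite_of_tendsto_ae hp hp_top
      (fun n => ((hF n).2.1.continuous.comp_aestronglyMeasurable hZ.1))
      (hg.memLp hZ) ?_ (ae_of_all μ fun ω => hpt (Zlim ω))
    exact unifIntegrable_of_norm_le hp hp_top hZ
      (fun n ω => by simpa [Real.norm_eq_abs] using (hF n).abs_le (Zlim ω))
  have key : ∀ n, eLpNorm ((fun ω => F n (Z n ω)) - fun ω => g (Zlim ω)) p μ ≤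
      eLpNorm (Z n - Zlim) p μ +
        eLpNorm ((fun ω => F n (Zlim ω)) - fun ω => g (Zlim ω)) p μ := by
    intro n
    have heq : ((fun ω => F n (Z n ω)) - fun ω => g (Zlim ω)) =
        (fun ω => F n (Z n ω) - F n (Zlim ω)) +
          ((fun ω => F n (Zlim ω)) - fun ω => g (Zlim ω)) := by
      funext ω; simp only [Pi.sub_apply, Pi.add_apply]; ring
    rw [heq]
    refine le_trans (eLpNorm_add_le
      (((hF n).2.1.continuous.comp_aestronglyMeasurable (hZn n).1).sub
        ((hF n).2.1.continuous.comp_aestronglyMeasurable hZ.1))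
      (((hF n).2.1.continuous.comp_aestronglyMeasurable hZ.1).sub
        (hg.2.1.continuous.comp_aestronglyMeasurable hZ.1)) hp) ?_
    refine add_le_add_left (eLpNorm_mono fun ω => ?_) _
    simpa [Real.norm_eq_abs, Real.dist_eq] using (hF n).2.1.dist_le_mul (Z n ω) (Zlim ω)
  have hsum : Tendsto (fun n => eLpNorm (Z n - Zlim) p μ +
      eLpNorm ((fun ω => F n (Zlim ω)) - fun ω => g (Zlim ω)) p μ) atTop (𝓝 0) := by
    simpa using hZconv.add hA
  exact tendsto_of_tendsto_of_tendsto_of_le_of_le tendsto_const_nhds hsum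
    (fun n => zero_le) key

/-- The set whose infimum defines `riskSharingValue` is bounded below
(a sequential compactness argument on `A⁰_Lip`). -/
lemma bddBelow_riskSet {Ω : Type*} [MeasurableSpace Ω] (μ : Measure Ω) [IsProbabilityMeasure μ]
    (p : ℝ≥0∞) (hp : 1 ≤ p) (hp_top : p ≠ ∞) (ρ1 ρ2 : (Ω → ℝ) → ℝ)
    (h1 : LpSeqContinuous μ p ρ1) (h2 : LpSeqContinuous μ p ρ2)
    {Z : Ω → ℝ} (hZ : MemLp Z p μ) :
    BddBelow {r : ℝ | ∃ f : ℝ → ℝ, IsA0Lip f ∧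
      r = ρ1 (fun ω => f (Z ω)) + ρ2 (fun ω => Z ω - f (Z ω))} := by
  by_contra hb
  rw [not_bddBelow_iff] at hb
  -- choose a minimizing-type sequence with values below `-k`
  have hseq : ∀ k : ℕ, ∃ f : ℝ → ℝ, IsA0Lip f ∧
      ρ1 (fun ω => f (Z ω)) + ρ2 (fun ω => Z ω - f (Z ω)) < -(k : ℝ) := by
    intro k
    obtain ⟨r, ⟨f, hf, rfl⟩, hr⟩ := hb (-(k : ℝ))
    exact ⟨f, hf, hr⟩
  choose f hf hvalf using hseq
  -- sequential compactness: pointwise convergence on the rationals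
  set X := ∀ q : ℚ, Set.Icc (-(|(q : ℝ)|)) (|(q : ℝ)|) with hX
  have hmem : ∀ (k : ℕ) (q : ℚ), f k (q : ℝ) ∈ Set.Icc (-(|(q : ℝ)|)) (|(q : ℝ)|) := by
    intro k q
    have := (hf k).abs_le (q : ℝ)
    exact abs_le.mp this
  set x : ℕ → X := fun k q => ⟨f k (q : ℝ), hmem k q⟩ with hxdef
  obtain ⟨a, -, φ, hφ, hconv⟩ :=
    (isCompact_univ : IsCompact (Set.univ : Set X)).tendsto_subseq (fun k => Set.mem_univ (x k))
  have hq : ∀ q : ℚ, Tendsto (fun k => f (φ k) (q : ℝ)) atTop (𝓝 ((a q : ℝ))) := by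
    intro q
    have h1' : Tendsto (fun k => (x ∘ φ) k q) atTop (𝓝 (a q)) := (tendsto_pi_nhds.mp hconv) q
    exact (continuous_subtype_val.tendsto (a q)).comp h1'
  -- pointwise convergence everywhere, via equi-Lipschitzness
  have hc : ∀ y : ℝ, ∃ l : ℝ, Tendsto (fun k => f (φ k) y) atTop (𝓝 l) := by
    intro y
    have hcauchy : CauchySeq (fun k => f (φ k) y) := by
      rw [Metric.cauchySeq_iff]
      intro ε hε
      obtain ⟨q, hq'⟩ := exists_rat_near y (show (0 : ℝ) < ε / 4 by linarith)
      have hcq : CauchySeq (fun k => f (φ k) (q : ℝ)) := (hq q).cauchySeq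
      rw [Metric.cauchySeq_iff] at hcq
      obtain ⟨N, hN⟩ := hcq (ε / 4) (by linarith)
      refine ⟨N, fun m hm n hn => ?_⟩
      have l1 : dist (f (φ m) y) (f (φ m) (q : ℝ)) ≤ ε / 4 := by
        refine le_trans ((hf (φ m)).2.1.dist_le_mul y (q : ℝ)) ?_
        rw [NNReal.coe_one, one_mul, Real.dist_eq]
        exact le_of_lt hq'
      have l2 : dist (f (φ n) (q : ℝ)) (f (φ n) y) ≤ ε / 4 := by
        refine le_trans ((hf (φ n)).2.1.dist_le_mul (q : ℝ) y) ?_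
        rw [NNReal.coe_one, one_mul, Real.dist_eq, abs_sub_comm]
        exact le_of_lt hq'
      have l3 : dist (f (φ m) (q : ℝ)) (f (φ n) (q : ℝ)) < ε / 4 := hN m hm n hn
      calc dist (f (φ m) y) (f (φ n) y)
          ≤ dist (f (φ m) y) (f (φ m) (q : ℝ)) + dist (f (φ m) (q : ℝ)) (f (φ n) y) :=
            dist_triangle _ _ _
        _ ≤ dist (f (φ m) y) (f (φ m) (q : ℝ)) +
            (dist (f (φ m) (q : ℝ)) (f (φ n) (q : ℝ)) + dist (f (φ n) (q : ℝ)) (f (φ n) y)) :=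
            by gcongr; exact dist_triangle _ _ _
        _ < ε := by linarith
    exact cauchySeq_tendsto_of_complete hcauchy
  choose h hpt using hc
  have hhlip : IsA0Lip h := isA0Lip_of_tendsto (fun k => hf (φ k)) hpt
  -- values along the subsequence converge, contradiction with `< -k`
  have hZconst : Tendsto (fun k : ℕ => eLpNorm ((fun _ => Z) k - Z) p μ) atTop
      (𝓝 (0 : ℝ≥0∞)) := by
    simp
  have hconv1 := key_conv hp hp_top (fun _ => hZ) hZ hZconst (fun k => hf (φ k)) hpt
  have hconv2 := key_conv hp hp_top (fun _ => hZ) hZ hZconst (fun k => (hf (φ k)).compl)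
    (fun y => tendsto_const_nhds.sub (hpt y))
  have hρ1 := h1 (fun k ω => f (φ k) (Z ω)) (fun ω => h (Z ω))
    (fun k => (hf (φ k)).memLp hZ) (hhlip.memLp hZ) hconv1
  have hρ2 := h2 (fun k ω => Z ω - f (φ k) (Z ω)) (fun ω => Z ω - h (Z ω))
    (fun k => (hf (φ k)).memLp_sub hZ) (hhlip.memLp_sub hZ) hconv2
  have hval : Tendsto (fun k => ρ1 (fun ω => f (φ k) (Z ω)) +
      ρ2 (fun ω => Z ω - f (φ k) (Z ω))) atTop
      (𝓝 (ρ1 (fun ω => h (Z ω)) + ρ2 (fun ω => Z ω - h (Z ω)))) := hρ1.add hρ2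
  set c : ℝ := ρ1 (fun ω => h (Z ω)) + ρ2 (fun ω => Z ω - h (Z ω))
  have hev : ∀ᶠ k in atTop, c - 1 < ρ1 (fun ω => f (φ k) (Z ω)) +
      ρ2 (fun ω => Z ω - f (φ k) (Z ω)) :=
    hval.eventually (eventually_gt_nhds (by linarith))
  have hev2 : ∀ᶠ k : ℕ in atTop, (1 : ℝ) - c ≤ (k : ℝ) :=
    (tendsto_natCast_atTop_atTop.eventually_ge_atTop (1 - c))
  obtain ⟨k, hk1, hk2⟩ := (hev.and hev2).exists
  have hk3 : ρ1 (fun ω => f (φ k) (Z ω)) + ρ2 (fun ω => Z ω - f (φ k) (Z ω)) <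
      -(φ k : ℝ) := hvalf (φ k)
  have hφk : (k : ℝ) ≤ (φ k : ℝ) := Nat.cast_le.mpr (hφ.le_apply)
  linarith

end Aux

/-- Upper hemicontinuity of the argmin correspondence: if `Z_n → Z` in `L^p`, the
`f̂_n ∈ A⁰_Lip` are minimizers for `Z_n`, and `f̂_n → g` uniformly on every compact set,
then `g ∈ A⁰_Lip` and `g` is a minimizer for `Z`. -/
theorem argmin_locally_uniform_limit_is_argmin
    {Ω : Type*} [MeasurableSpace Ω] (μ : MeasureTheory.Measure Ω) [IsProbabilityMeasure μ]
    (p : ℝ≥0∞) (hp : 1 ≤ p) (hp_top : p ≠ ∞)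
    (ρ1 ρ2 : (Ω → ℝ) → ℝ)
    (h1 : LpSeqContinuous μ p ρ1) (h2 : LpSeqContinuous μ p ρ2)
    (Z : ℕ → Ω → ℝ) (Zlim : Ω → ℝ)
    (hZn : ∀ n, MemLp (Z n) p μ) (hZ : MemLp Zlim p μ)
    (hZconv : Filter.Tendsto (fun n => eLpNorm (Z n - Zlim) p μ) Filter.atTop (nhds 0))
    (fhat : ℕ → ℝ → ℝ) (hfhat : ∀ n, IsA0Lip (fhat n))
    (hmin : ∀ n, ρ1 (fun ω => fhat n (Z n ω)) + ρ2 (fun ω => Z n ω - fhat n (Z n ω)) =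
      riskSharingValue ρ1 ρ2 (Z n))
    (g : ℝ → ℝ)
    (hconv : ∀ K : Set ℝ, IsCompact K →
      TendstoUniformlyOn (fun n => fhat n) g Filter.atTop K) :
    IsA0Lip g ∧
      ρ1 (fun ω => g (Zlim ω)) + ρ2 (fun ω => Zlim ω - g (Zlim ω)) =
        riskSharingValue ρ1 ρ2 Zlim := by
  -- pointwise convergence of the minimizers
  have hpt : ∀ x, Tendsto (fun n => fhat n x) atTop (𝓝 (g x)) := fun x =>
    (hconv {x} isCompact_singleton).tendsto_at (Set.mem_singleton x)
  have hg : IsA0Lip g := isA0Lip_of_tendsto hfhat hpt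
  refine ⟨hg, ?_⟩
  set L : ℝ := ρ1 (fun ω => g (Zlim ω)) + ρ2 (fun ω => Zlim ω - g (Zlim ω)) with hL
  -- the values of the minimizers converge to L
  have hconv1 := key_conv hp hp_top hZn hZ hZconv hfhat hpt
  have hconv2 := key_conv hp hp_top hZn hZ hZconv (fun n => (hfhat n).compl)
    (fun x => tendsto_const_nhds.sub (hpt x))
  have hρ1 := h1 (fun n ω => fhat n (Z n ω)) (fun ω => g (Zlim ω))
    (fun n => (hfhat n).memLp (hZn n)) (hg.memLp hZ) hconv1
  have hρ2 := h2 (fun n ω => Z n ω - fhat n (Z n ω)) (fun ω => Zlim ω - g (Zlim ω))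
    (fun n => (hfhat n).memLp_sub (hZn n)) (hg.memLp_sub hZ) hconv2
  have hVconv : Tendsto (fun n => riskSharingValue ρ1 ρ2 (Z n)) atTop (𝓝 L) := by
    have := hρ1.add hρ2
    simpa only [hmin] using this
  -- L is a lower bound of the target set
  have hlb : ∀ r ∈ {r : ℝ | ∃ f : ℝ → ℝ, IsA0Lip f ∧
      r = ρ1 (fun ω => f (Zlim ω)) + ρ2 (fun ω => Zlim ω - f (Zlim ω))}, L ≤ r := by
    rintro r ⟨f, hf, rfl⟩
    -- values of f at Z n converge to its value at Zlim
    have hc1 := key_conv hp hp_top hZn hZ hZconv (fun _ : ℕ => hf)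
      (fun x => (tendsto_const_nhds : Tendsto (fun _ : ℕ => f x) atTop (𝓝 (f x))))
    have hc2 := key_conv hp hp_top hZn hZ hZconv (fun _ : ℕ => hf.compl)
      (fun x => (tendsto_const_nhds :
        Tendsto (fun _ : ℕ => x - f x) atTop (𝓝 (x - f x))))
    have hr1 := h1 (fun n ω => f (Z n ω)) (fun ω => f (Zlim ω))
      (fun n => hf.memLp (hZn n)) (hf.memLp hZ) hc1
    have hr2 := h2 (fun n ω => Z n ω - f (Z n ω)) (fun ω => Zlim ω - f (Zlim ω))
      (fun n => hf.memLp_sub (hZn n)) (hf.memLp_sub hZ) hc2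
    have hrconv := hr1.add hr2
    refine le_of_tendsto_of_tendsto' hVconv hrconv fun n => ?_
    exact csInf_le (bddBelow_riskSet μ p hp hp_top ρ1 ρ2 h1 h2 (hZn n))
      ⟨f, hf, rfl⟩
  have hmem : L ∈ {r : ℝ | ∃ f : ℝ → ℝ, IsA0Lip f ∧
      r = ρ1 (fun ω => f (Zlim ω)) + ρ2 (fun ω => Zlim ω - f (Zlim ω))} := ⟨g, hg, rfl⟩
  exact (IsLeast.csInf_eq ⟨hmem, hlb⟩).symm
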